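/- In ℂ[[x,y,z]], the element (z+x+y)·x·y is integral over the ideal generated by (z+x+y)^2, (z+x+y)x^2, (z+x+y)y^2, and (x^2+y^2)(x^2+2y^2). -/
import Mathlib

/-- `f` is integral over the ideal `J`: it satisfies a monic equation
`f^n + a_1 f^{n-1} + ... + a_n = 0` with `a_i ∈ J^i`. -/
def IsIntegralOverIdeal {R : Type*} [CommRing R] (J : Ideal R) (f : R) : Prop :=
  ∃ n : ℕ, 0 < n ∧ ∃ a : ℕ → R, (∀ i ∈ Finset.Icc 1 n, a i ∈ J ^ i) ∧
    f ^ n + ∑ i ∈ Finset.Icc 1 n, a i * f ^ (n - i) = 0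

lemma aux_integral {R : Type*} [CommRing R] [Algebra ℚ R] (x y z : R) :
    IsIntegralOverIdeal
      (Ideal.span {(z + x + y) ^ 2, (z + x + y) * x ^ 2, (z + x + y) * y ^ 2,
        (x ^ 2 + y ^ 2) * (x ^ 2 + 2 * y ^ 2)})
      ((z + x + y) * x * y) := by
  set w : R := z + x + y with hw
  set g : R := (x ^ 2 + y ^ 2) * (x ^ 2 + 2 * y ^ 2) with hg
  set J : Ideal R := Ideal.span {w ^ 2, w * x ^ 2, w * y ^ 2, g} with hJ
  set f : R := w * x * y with hf
  refine ⟨2, by norm_num, fun i => if i = 2 then -(f ^ 2) else 0, ?_, ?_⟩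
  · intro i hi
    rw [Finset.mem_Icc] at hi
    obtain rfl | rfl : i = 1 ∨ i = 2 := by omega
    · simp
    · simp only [if_pos rfl]
      have hA : (w * x ^ 2) * (w * x ^ 2) ∈ J ^ 2 := by
        rw [sq J]
        exact Ideal.mul_mem_mul (Ideal.subset_span (by simp)) (Ideal.subset_span (by simp))
      have hB : (w * y ^ 2) * (w * y ^ 2) ∈ J ^ 2 := by
        rw [sq J]
        exact Ideal.mul_mem_mul (Ideal.subset_span (by simp)) (Ideal.subset_span (by simp))
      have hC : (w ^ 2) * g ∈ J ^ 2 := by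
        rw [sq J]
        exact Ideal.mul_mem_mul (Ideal.subset_span (by simp)) (Ideal.subset_span (by simp))
      have key : (w * x ^ 2) * (w * x ^ 2) + (2 : R) * ((w * y ^ 2) * (w * y ^ 2))
          - (w ^ 2) * g = (3 : R) * (-(f ^ 2)) := by
        rw [hf, hg, hw]; ring
      have h3 : algebraMap ℚ R (1/3) * (3 : R) = 1 := by
        rw [(map_ofNat (algebraMap ℚ R) 3).symm, ← map_mul]
        norm_num
      have heq : -(f ^ 2) = algebraMap ℚ R (1/3) *
          ((w * x ^ 2) * (w * x ^ 2) + (2 : R) * ((w * y ^ 2) * (w * y ^ 2))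
            - (w ^ 2) * g) := by
        rw [key, ← mul_assoc, h3, one_mul]
      rw [heq]
      exact Ideal.mul_mem_left _ _ (Ideal.sub_mem _ (Ideal.add_mem _ hA
        (Ideal.mul_mem_left _ _ hB)) hC)
  · rw [show Finset.Icc 1 2 = {1, 2} from rfl]
    simp

open MvPowerSeries in
/-- In `ℂ[[x,y,z]]`, the element `(z+x+y)·x·y` is integral over the ideal generated by
`(z+x+y)^2, (z+x+y)x^2, (z+x+y)y^2, (x^2+y^2)(x^2+2y^2)`. -/
theorem zxy_integral_over_product_ideal :
    letI x : MvPowerSeries (Fin 3) ℂ := X 0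
    letI y : MvPowerSeries (Fin 3) ℂ := X 1
    letI z : MvPowerSeries (Fin 3) ℂ := X 2
    IsIntegralOverIdeal
      (Ideal.span {(z + x + y) ^ 2, (z + x + y) * x ^ 2, (z + x + y) * y ^ 2,
        (x ^ 2 + y ^ 2) * (x ^ 2 + 2 * y ^ 2)})
      ((z + x + y) * x * y) := by
  exact aux_integral _ _ _
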